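/- If A and B are finite-rank self-adjoint operators on a complex Hilbert space that are unitarily conjugate (lie in the same conjugacy class), then the rank of B - A is not equal to 1. -/

import Mathlib

open LinearMap

/-- Trace of a finite-rank operator restricted to a finite-dimensional subspace containing its
range does not depend on the subspace. -/
lemma trace_restrict_mono {H : Type*} [NormedAddCommGroup H] [InnerProductSpace ℂ H]
    {V W : Submodule ℂ H} [FiniteDimensional ℂ V] [FiniteDimensional ℂ W]
    (hVW : V ≤ W) (T : H →ₗ[ℂ] H) (hT : ∀ x, T x ∈ V) :
    trace ℂ W (T.restrict (fun x _ => hVW (hT x)))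
      = trace ℂ V (T.restrict (fun x _ => hT x)) := by
  let g : W →ₗ[ℂ] V := (T ∘ₗ W.subtype).codRestrict V (fun x => hT _)
  let ι : V →ₗ[ℂ] W := Submodule.inclusion hVW
  have h1 : T.restrict (fun x _ => hVW (hT x)) = ι ∘ₗ g := by
    ext x; rfl
  have h2 : T.restrict (fun x _ => hT x) = g ∘ₗ ι := by
    ext x; rfl
  rw [h1, h2, trace_comp_comm']

theorem stmt_0 {H : Type*} [NormedAddCommGroup H] [InnerProductSpace ℂ H] [CompleteSpace H]
    (A B : H →ₗ[ℂ] H)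
    (hA : LinearMap.IsSymmetric A) (hB : LinearMap.IsSymmetric B)
    (hAfr : FiniteDimensional ℂ (LinearMap.range A))
    (hBfr : FiniteDimensional ℂ (LinearMap.range B))
    (U : H ≃ₗᵢ[ℂ] H) (hconj : ∀ x, B x = U (A (U.symm x))) :
    Module.finrank ℂ (LinearMap.range (B - A)) ≠ 1 := by
  intro hrank
  haveI := hAfr
  set e : H ≃ₗ[ℂ] H := U.toLinearEquiv with he
  set V : Submodule ℂ H := LinearMap.range A with hV
  set W : Submodule ℂ H := V.map (e : H →ₗ[ℂ] H) with hW
  haveI : FiniteDimensional ℂ W := (U.toLinearEquiv.submoduleMap V).finiteDimensional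
  set Vb : Submodule ℂ H := V ⊔ W with hVb
  haveI : FiniteDimensional ℂ Vb := Submodule.finiteDimensional_sup V W
  have hAx : ∀ x, A x ∈ V := fun x => LinearMap.mem_range_self A x
  have hBx : ∀ x, B x ∈ W := by
    intro x
    rw [hconj x]
    exact ⟨A (U.symm x), LinearMap.mem_range_self A _, rfl⟩
  have hAVb : ∀ x, A x ∈ Vb := fun x => Submodule.mem_sup_left (hAx x)
  have hBVb : ∀ x, B x ∈ Vb := fun x => Submodule.mem_sup_right (hBx x)
  set T : H →ₗ[ℂ] H := B - A with hT
  have hTVb : ∀ x, T x ∈ Vb := fun x => Submodule.sub_mem _ (hBVb x) (hAVb x)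
  -- trace of B over W equals trace of A over V
  have hBconj : B.restrict (fun x (_ : x ∈ W) => hBx x)
      = (U.toLinearEquiv.submoduleMap V).conj (A.restrict (fun x (_ : x ∈ V) => hAx x)) := by
    ext ⟨x, hx⟩
    simp only [LinearMap.restrict_apply, LinearEquiv.conj_apply, LinearMap.coe_comp,
      Function.comp_apply, LinearEquiv.coe_coe]
    rw [hconj x]
    congr 1
  have htrB : trace ℂ W (B.restrict (fun x (_ : x ∈ W) => hBx x))
      = trace ℂ V (A.restrict (fun x (_ : x ∈ V) => hAx x)) := by
    rw [hBconj, LinearMap.trace_conj']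
  -- trace of T over Vb is zero
  have hrestr : (T.restrict (fun x (_ : x ∈ Vb) => hTVb x))
      = B.restrict (fun x (_ : x ∈ Vb) => hBVb x) - A.restrict (fun x (_ : x ∈ Vb) => hAVb x) := by
    ext x; rfl
  have htrT0 : trace ℂ Vb (T.restrict (fun x (_ : x ∈ Vb) => hTVb x)) = 0 := by
    rw [hrestr, map_sub]
    rw [trace_restrict_mono le_sup_right B hBx, trace_restrict_mono le_sup_left A hAx,
      htrB, sub_self]
  -- T is symmetric
  have hTsymm : T.IsSymmetric := hB.sub hA
  -- rank one: get spanning vector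
  obtain ⟨⟨v, hvmem⟩, hvspan⟩ := finrank_eq_one_iff'.mp hrank
  obtain ⟨hvne, hspan⟩ := hvspan
  have hv0 : v ≠ 0 := fun h => hvne (Subtype.ext h)
  -- every element of range T is a multiple of v
  have hmul : ∀ y ∈ LinearMap.range T, ∃ c : ℂ, c • v = y := by
    intro y hy
    obtain ⟨c, hc⟩ := hspan ⟨y, hy⟩
    exact ⟨c, congrArg Subtype.val hc⟩
  obtain ⟨c, hc⟩ := hmul (T v) (LinearMap.mem_range_self T v)
  -- c ≠ 0 from symmetry
  obtain ⟨x₀, hx₀⟩ := hvmem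
  have hcne : c ≠ 0 := by
    intro hc0
    have hTv : T v = 0 := by rw [← hc, hc0, zero_smul]
    have : (inner ℂ v v : ℂ) = 0 := by
      calc (inner ℂ v v : ℂ) = inner ℂ (T x₀) v := by rw [hx₀]
        _ = inner ℂ x₀ (T v) := hTsymm x₀ v
        _ = 0 := by rw [hTv, inner_zero_right]
    exact hv0 (inner_self_eq_zero.mp this)
  -- trace of T over span {v} equals c
  set S : Submodule ℂ H := LinearMap.range T with hS
  haveI : FiniteDimensional ℂ S := by
    rw [hS]; exact Module.finite_of_finrank_eq_succ hrank
  have hTS : ∀ x, T x ∈ S := fun x => LinearMap.mem_range_self T x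
  have hSVb : S ≤ Vb := by
    rintro y ⟨x, rfl⟩; exact hTVb x
  have hTSrestrict : T.restrict (fun x (_ : x ∈ S) => hTS x) = c • LinearMap.id := by
    ext ⟨y, hy⟩
    obtain ⟨a, rfl⟩ := hmul y hy
    simp only [LinearMap.restrict_apply, LinearMap.smul_apply, LinearMap.id_apply,
      map_smul, Submodule.coe_smul]
    rw [← hc, smul_comm]
  have htrS : trace ℂ S (T.restrict (fun x (_ : x ∈ S) => hTS x)) = c := by
    rw [hTSrestrict, map_smul, LinearMap.trace_id]
    have : Module.finrank ℂ S = 1 := hrank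
    rw [this]
    simp
  have := trace_restrict_mono hSVb T hTS
  rw [htrT0, htrS] at this
  exact hcne this.symm
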